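/- Let (X,Y,Z) be distributed over the finite set 𝒳×𝒴×𝒵 according to a PMF P. Then min over guessing functions for X given (Y,Z) of E[G(X|Y,Z)^ρ] ≥ max( |𝒵|^{−ρ} · (min over guessing functions for X given Y of E[G(X|Y)^ρ]), 1 ). -/

import Mathlib

open Real Finset Filter
open scoped Classical

noncomputable section

/-- `G` is a guessing function for `𝒳` given side-information in `W`: for each
side-information value `w`, `x ↦ G x w` is a bijection from `𝒳` onto `{1, …, |𝒳|}`. -/
def IsGuessing {𝒳 W : Type*} [Fintype 𝒳] (G : 𝒳 → W → ℕ) : Prop :=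
  ∀ w : W, (Function.Injective fun x => G x w) ∧
    ∀ x, G x w ∈ Finset.Icc 1 (Fintype.card 𝒳)

/-- `P` is a probability mass function on `𝒳 × 𝒴` (written in curried form). -/
def IsPMF {𝒳 𝒴 : Type*} [Fintype 𝒳] [Fintype 𝒴] (P : 𝒳 → 𝒴 → ℝ) : Prop :=
  (∀ x y, 0 ≤ P x y) ∧ ∑ x, ∑ y, P x y = 1

/-- `Q` is a conditional PMF on `M` given `(x, y)`. -/
def IsCondPMF {𝒳 𝒴 M : Type*} [Fintype M] (Q : 𝒳 → 𝒴 → M → ℝ) : Prop :=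
  ∀ x y, (∀ m, 0 ≤ Q x y m) ∧ ∑ m, Q x y m = 1

/-- Conditional Rényi entropy of order `α` (base-2 logarithms). -/
def condRenyi {𝒳 𝒴 : Type*} [Fintype 𝒳] [Fintype 𝒴] (α : ℝ) (P : 𝒳 → 𝒴 → ℝ) : ℝ :=
  (α / (1 - α)) * Real.logb 2 (∑ y, (∑ x, P x y ^ α) ^ (1 / α))

/-- Bob's guessing ambiguity: the least `ρ`-th guessing moment over guessing
functions for `X` given `(Y, M₁, M₂)`. -/
def bobGuessAmb {𝒳 𝒴 M₁ M₂ : Type*} [Fintype 𝒳] [Fintype 𝒴] [Fintype M₁] [Fintype M₂]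
    (ρ : ℝ) (P : 𝒳 → 𝒴 → ℝ) (Q : 𝒳 → 𝒴 → M₁ × M₂ → ℝ) : ℝ :=
  sInf { e | ∃ G : 𝒳 → 𝒴 × M₁ × M₂ → ℕ, IsGuessing G ∧
    e = ∑ x, ∑ y, ∑ m : M₁ × M₂, P x y * Q x y m * (G x (y, m) : ℝ) ^ ρ }

/-- Eve's ambiguity: the least `ρ`-th moment of the minimum of two guessing
functions, one for `X` given `(Y, M₁)` and one for `X` given `(Y, M₂)`. -/
def eveAmb {𝒳 𝒴 M₁ M₂ : Type*} [Fintype 𝒳] [Fintype 𝒴] [Fintype M₁] [Fintype M₂]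
    (ρ : ℝ) (P : 𝒳 → 𝒴 → ℝ) (Q : 𝒳 → 𝒴 → M₁ × M₂ → ℝ) : ℝ :=
  sInf { e | ∃ G₁ : 𝒳 → 𝒴 × M₁ → ℕ, ∃ G₂ : 𝒳 → 𝒴 × M₂ → ℕ,
    IsGuessing G₁ ∧ IsGuessing G₂ ∧
    e = ∑ x, ∑ y, ∑ m : M₁ × M₂, P x y * Q x y m *
      ((min (G₁ x (y, m.1)) (G₂ x (y, m.2)) : ℕ) : ℝ) ^ ρ }

/-- Bob's list ambiguity: the `ρ`-th moment of the size of the list of all `x`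
with positive posterior probability given `(Y, M₁, M₂)`. -/
def bobListAmb {𝒳 𝒴 M₁ M₂ : Type*} [Fintype 𝒳] [Fintype 𝒴] [Fintype M₁] [Fintype M₂]
    (ρ : ℝ) (P : 𝒳 → 𝒴 → ℝ) (Q : 𝒳 → 𝒴 → M₁ × M₂ → ℝ) : ℝ :=
  ∑ x, ∑ y, ∑ m : M₁ × M₂, P x y * Q x y m *
    ((Finset.univ.filter fun x' => 0 < P x' y * Q x' y m).card : ℝ) ^ ρ
lemma exists_guess_Y {𝒳 𝒴 𝒵 : Type*} [Fintype 𝒳] [Fintype 𝒴] [Fintype 𝒵]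
    [Nonempty 𝒳] [Nonempty 𝒵]
    (G : 𝒳 → 𝒴 × 𝒵 → ℕ) (hG : IsGuessing G) :
    ∃ G' : 𝒳 → 𝒴 → ℕ, IsGuessing G' ∧ ∀ x y z, G' x y ≤ Fintype.card 𝒵 * G x (y, z) := by
  classical
  set N := Fintype.card 𝒳 with hN
  set ι : 𝒳 → ℕ := fun x => (Fintype.equivFin 𝒳 x : ℕ) with hι
  have hιlt : ∀ x, ι x < N := fun x => (Fintype.equivFin 𝒳 x).isLt
  have hιinj : Function.Injective ι := by
    intro a b hab
    exact (Fintype.equivFin 𝒳).injective (Fin.ext hab)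
  set m : 𝒳 → 𝒴 → ℕ := fun x y => Finset.univ.inf' Finset.univ_nonempty (fun z => G x (y, z)) with hm
  set K : 𝒳 → 𝒴 → ℕ := fun x y => m x y * N + ι x with hK
  have hKinj : ∀ y, Function.Injective (fun x => K x y) := by
    intro y a b hab
    have hmod : ∀ c : 𝒳, K c y % N = ι c := by
      intro c
      show (m c y * N + ι c) % N = ι c
      rw [add_comm, Nat.add_mul_mod_self_right]
      exact Nat.mod_eq_of_lt (hιlt c)
    apply hιinj
    rw [← hmod a, ← hmod b]
    exact congrArg (· % N) hab
  refine ⟨fun x y => (Finset.univ.filter fun x' => K x' y ≤ K x y).card, ?_, ?_⟩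
  · intro y
    constructor
    · -- injective: strict mono in K
      have hmono : ∀ a b : 𝒳, K a y < K b y →
          (Finset.univ.filter fun x' => K x' y ≤ K a y).card <
          (Finset.univ.filter fun x' => K x' y ≤ K b y).card := by
        intro a b hab
        apply Finset.card_lt_card
        constructor
        · intro x hx
          simp only [Finset.mem_filter, Finset.mem_univ, true_and] at hx ⊢
          omega
        · intro hsub
          have hb : b ∈ (Finset.univ.filter fun x' => K x' y ≤ K b y) := by
            simp
          have := hsub hb
          simp only [Finset.mem_filter, Finset.mem_univ, true_and] at this
          omega
      intro a b hab
      by_contra hne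
      rcases lt_trichotomy (K a y) (K b y) with h | h | h
      · exact absurd hab (Nat.ne_of_lt (hmono a b h))
      · exact hne (hKinj y h)
      · exact absurd hab.symm (Nat.ne_of_lt (hmono b a h))
    · intro x
      rw [Finset.mem_Icc]
      constructor
      · apply Finset.card_pos.mpr
        exact ⟨x, by simp⟩
      · exact le_trans (Finset.card_filter_le _ _) (by simp)
  · intro x y z
    have step1 : (Finset.univ.filter fun x' => K x' y ≤ K x y) ⊆
        (Finset.univ.filter fun x' => m x' y ≤ m x y) := by
      intro x' hx'
      simp only [Finset.mem_filter, Finset.mem_univ, true_and] at hx' ⊢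
      have h1 : m x' y * N ≤ m x y * N + ι x := le_trans (Nat.le_add_right _ _) hx'
      have h2 : m x' y * N < (m x y + 1) * N := by
        have := hιlt x
        calc m x' y * N ≤ m x y * N + ι x := h1
        _ < m x y * N + N := by omega
        _ = (m x y + 1) * N := by ring
      have hNpos : 0 < N := Fintype.card_pos
      have := Nat.lt_of_mul_lt_mul_right h2
      omega
    have step2 : (Finset.univ.filter fun x' => m x' y ≤ m x y) ⊆
        Finset.univ.biUnion (fun z' : 𝒵 => Finset.univ.filter fun x' => G x' (y, z') ≤ m x y) := by
      intro x' hx'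
      simp only [Finset.mem_filter, Finset.mem_univ, true_and] at hx'
      obtain ⟨z', _, hz'⟩ := Finset.exists_mem_eq_inf' (Finset.univ_nonempty) (fun z => G x' (y, z))
      simp only [Finset.mem_biUnion, Finset.mem_filter, Finset.mem_univ, true_and]
      exact ⟨z', by rw [← hz']; exact hx'⟩
    have step3 : ∀ z' : 𝒵, (Finset.univ.filter fun x' => G x' (y, z') ≤ m x y).card ≤ m x y := by
      intro z'
      have : (Finset.univ.filter fun x' => G x' (y, z') ≤ m x y).card ≤
          (Finset.Icc 1 (m x y)).card := by
        apply Finset.card_le_card_of_injOn (fun x' => G x' (y, z'))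
        · intro x' hx'
          simp only [Finset.coe_filter, Finset.mem_coe, Finset.mem_filter, Finset.mem_univ, true_and, Set.mem_setOf_eq] at hx'
          rw [Finset.mem_coe, Finset.mem_Icc]
          have := ((hG (y, z')).2 x')
          rw [Finset.mem_Icc] at this
          exact ⟨this.1, hx'⟩
        · exact fun a _ b _ hab => (hG (y, z')).1 hab
      simpa using this
    have hmz : m x y ≤ G x (y, z) := Finset.inf'_le _ (Finset.mem_univ z)
    calc (Finset.univ.filter fun x' => K x' y ≤ K x y).card
        ≤ (Finset.univ.filter fun x' => m x' y ≤ m x y).card := Finset.card_le_card step1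
      _ ≤ (Finset.univ.biUnion (fun z' : 𝒵 => Finset.univ.filter fun x' => G x' (y, z') ≤ m x y)).card :=
          Finset.card_le_card step2
      _ ≤ ∑ z' : 𝒵, (Finset.univ.filter fun x' => G x' (y, z') ≤ m x y).card :=
          Finset.card_biUnion_le
      _ ≤ ∑ _z' : 𝒵, m x y := Finset.sum_le_sum (fun z' _ => step3 z')
      _ = Fintype.card 𝒵 * m x y := by simp [Finset.sum_const, mul_comm]
      _ ≤ Fintype.card 𝒵 * G x (y, z) := Nat.mul_le_mul_left _ hmz


theorem sideInfo_improves_guessing_converse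
    {𝒳 𝒴 𝒵 : Type*} [Fintype 𝒳] [Fintype 𝒴] [Fintype 𝒵]
    [Nonempty 𝒳] [Nonempty 𝒴] [Nonempty 𝒵]
    (ρ : ℝ) (hρ : 0 < ρ) (P : 𝒳 → 𝒴 → 𝒵 → ℝ)
    (hP : (∀ x y z, 0 ≤ P x y z) ∧ ∑ x, ∑ y, ∑ z, P x y z = 1) :
    max ((Fintype.card 𝒵 : ℝ) ^ (-ρ) *
        sInf { e | ∃ G : 𝒳 → 𝒴 → ℕ, IsGuessing G ∧
          e = ∑ x, ∑ y, ∑ z, P x y z * (G x y : ℝ) ^ ρ }) 1 ≤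
      sInf { e | ∃ G : 𝒳 → 𝒴 × 𝒵 → ℕ, IsGuessing G ∧
        e = ∑ x, ∑ y, ∑ z, P x y z * (G x (y, z) : ℝ) ^ ρ } := by
  classical
  obtain ⟨hP0, hP1⟩ := hP
  have hZpos : (0:ℝ) < (Fintype.card 𝒵 : ℝ) := by
    exact_mod_cast Fintype.card_pos
  apply le_csInf
  · -- nonempty
    have hguess : IsGuessing (fun (x : 𝒳) (_ : 𝒴 × 𝒵) => (Fintype.equivFin 𝒳 x : ℕ) + 1) := by
      intro w
      constructor
      · intro a b hab
        simp only at hab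
        exact (Fintype.equivFin 𝒳).injective (Fin.ext (by omega))
      · intro x
        rw [Finset.mem_Icc]
        exact ⟨Nat.le_add_left _ _, (Fintype.equivFin 𝒳 x).isLt⟩
    exact ⟨_, _, hguess, rfl⟩
  · rintro e ⟨G, hG, rfl⟩
    apply max_le
    · obtain ⟨G', hG', hle⟩ := exists_guess_Y G hG
      set S₁ := { e | ∃ G : 𝒳 → 𝒴 → ℕ, IsGuessing G ∧
          e = ∑ x, ∑ y, ∑ z, P x y z * (G x y : ℝ) ^ ρ } with hS₁
      have hbdd : BddBelow S₁ := by
        refine ⟨0, ?_⟩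
        rintro e' ⟨G'', hG'', rfl⟩
        refine Finset.sum_nonneg fun x _ => Finset.sum_nonneg fun y _ =>
          Finset.sum_nonneg fun z _ =>
          mul_nonneg (hP0 x y z) (Real.rpow_nonneg (by positivity) ρ)
      have h1 : sInf S₁ ≤ ∑ x, ∑ y, ∑ z, P x y z * (G' x y : ℝ) ^ ρ :=
        csInf_le hbdd ⟨G', hG', rfl⟩
      have h2 : (∑ x, ∑ y, ∑ z, P x y z * (G' x y : ℝ) ^ ρ) ≤
          (Fintype.card 𝒵 : ℝ) ^ ρ * ∑ x, ∑ y, ∑ z, P x y z * (G x (y, z) : ℝ) ^ ρ := by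
        rw [Finset.mul_sum]
        apply Finset.sum_le_sum
        intro x _
        rw [Finset.mul_sum]
        apply Finset.sum_le_sum
        intro y _
        rw [Finset.mul_sum]
        apply Finset.sum_le_sum
        intro z _
        have hb : (G' x y : ℝ) ^ ρ ≤ ((Fintype.card 𝒵 : ℝ) * (G x (y, z) : ℝ)) ^ ρ := by
          apply Real.rpow_le_rpow (by positivity) ?_ hρ.le
          exact_mod_cast hle x y z
        rw [Real.mul_rpow hZpos.le (by positivity)] at hb
        calc P x y z * (G' x y : ℝ) ^ ρ
            ≤ P x y z * ((Fintype.card 𝒵 : ℝ) ^ ρ * (G x (y, z) : ℝ) ^ ρ) :=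
              mul_le_mul_of_nonneg_left hb (hP0 x y z)
          _ = (Fintype.card 𝒵 : ℝ) ^ ρ * (P x y z * (G x (y, z) : ℝ) ^ ρ) := by ring
      calc (Fintype.card 𝒵 : ℝ) ^ (-ρ) * sInf S₁
          ≤ (Fintype.card 𝒵 : ℝ) ^ (-ρ) *
            ((Fintype.card 𝒵 : ℝ) ^ ρ * ∑ x, ∑ y, ∑ z, P x y z * (G x (y, z) : ℝ) ^ ρ) :=
            mul_le_mul_of_nonneg_left (h1.trans h2) (Real.rpow_nonneg hZpos.le _)
        _ = ∑ x, ∑ y, ∑ z, P x y z * (G x (y, z) : ℝ) ^ ρ := by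
            rw [← mul_assoc, ← Real.rpow_add hZpos]
            simp
    · calc (1:ℝ) = ∑ x, ∑ y, ∑ z, P x y z := hP1.symm
        _ ≤ ∑ x, ∑ y, ∑ z, P x y z * (G x (y, z) : ℝ) ^ ρ := by
            apply Finset.sum_le_sum; intro x _
            apply Finset.sum_le_sum; intro y _
            apply Finset.sum_le_sum; intro z _
            have h1 : (1:ℝ) ≤ (G x (y, z) : ℝ) := by
              have := (hG (y, z)).2 x
              rw [Finset.mem_Icc] at this
              exact_mod_cast this.1
            have := Real.one_le_rpow h1 hρ.le
            nlinarith [hP0 x y z]
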